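/- arXiv:2105.05473 — 2 statements merged into one kernel-verified Lean document; each statement's English description precedes it below -/
import Mathlib

section
/- Let n ≥ 1 and let p, q : Fin n → ℝ be probability vectors (nonnegative, summing to 1) with q i > 0 for all i. Then ∑ i, p i / √(q i) ≥ (∑ i, (p i)^(2/3))^(3/2), with equality when q i is proportional to (p i)^(2/3). -/
theorem stmt_3 (n : ℕ) (hn : 1 ≤ n) (p q : Fin n → ℝ)
    (hp : ∀ i, 0 ≤ p i) (hpsum : ∑ i, p i = 1)
    (hq : ∀ i, 0 < q i) (hqsum : ∑ i, q i = 1) :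
    (∑ i, (p i) ^ ((2 : ℝ) / 3)) ^ ((3 : ℝ) / 2) ≤ ∑ i, p i / Real.sqrt (q i) ∧
      ((∀ i, q i = (p i) ^ ((2 : ℝ) / 3) / ∑ j, (p j) ^ ((2 : ℝ) / 3)) →
        ∑ i, p i / Real.sqrt (q i) = (∑ i, (p i) ^ ((2 : ℝ) / 3)) ^ ((3 : ℝ) / 2)) := by
  have hRHS : 0 ≤ ∑ i, p i / Real.sqrt (q i) :=
    Finset.sum_nonneg fun i _ => div_nonneg (hp i) (Real.sqrt_nonneg _)
  constructor
  · -- Hölder with exponents 3/2 and 3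
    have h := Real.inner_le_Lp_mul_Lq_of_nonneg (s := Finset.univ)
      (f := fun i => (p i / Real.sqrt (q i)) ^ ((2:ℝ)/3))
      (g := fun i => (q i) ^ ((1:ℝ)/3)) (p := (3:ℝ)/2) (q := 3)
      ⟨by norm_num, by norm_num, by norm_num⟩
      (fun i _ => Real.rpow_nonneg (div_nonneg (hp i) (Real.sqrt_nonneg _)) _)
      (fun i _ => Real.rpow_nonneg (hq i).le _)
    have heq1 : ∀ i, (p i / Real.sqrt (q i)) ^ ((2:ℝ)/3) * (q i) ^ ((1:ℝ)/3)
        = (p i) ^ ((2:ℝ)/3) := by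
      intro i
      rw [Real.sqrt_eq_rpow, Real.div_rpow (hp i) (Real.rpow_nonneg (hq i).le _),
        ← Real.rpow_mul (hq i).le]
      norm_num
      exact div_mul_cancel₀ _ (ne_of_gt (Real.rpow_pos_of_pos (hq i) _))
    have heq2 : ∀ i, ((p i / Real.sqrt (q i)) ^ ((2:ℝ)/3)) ^ ((3:ℝ)/2)
        = p i / Real.sqrt (q i) := by
      intro i
      rw [← Real.rpow_mul (div_nonneg (hp i) (Real.sqrt_nonneg _))]
      norm_num
    have heq3 : ∀ i, ((q i) ^ ((1:ℝ)/3)) ^ (3:ℝ) = q i := by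
      intro i
      rw [← Real.rpow_mul (hq i).le]
      norm_num
    simp only [heq1, heq2, heq3] at h
    rw [hqsum, Real.one_rpow, mul_one] at h
    have h2 : (1:ℝ)/(3/2) = (2:ℝ)/3 := by norm_num
    rw [h2] at h
    calc (∑ i, (p i) ^ ((2:ℝ)/3)) ^ ((3:ℝ)/2)
        ≤ ((∑ i, p i / Real.sqrt (q i)) ^ ((2:ℝ)/3)) ^ ((3:ℝ)/2) := by
          apply Real.rpow_le_rpow (Finset.sum_nonneg fun i _ => Real.rpow_nonneg (hp i) _) h
          norm_num
      _ = ∑ i, p i / Real.sqrt (q i) := by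
          rw [← Real.rpow_mul hRHS]; norm_num
  · intro hqe
    set S := ∑ j, (p j) ^ ((2:ℝ)/3) with hS
    have hppos : ∀ i, 0 < p i := by
      intro i
      rcases (hp i).lt_or_eq with h | h
      · exact h
      · exfalso
        have := hqe i
        rw [← h, Real.zero_rpow (by norm_num), zero_div] at this
        exact (hq i).ne' this
    have hSpos : 0 < S := by
      have := hq ⟨0, hn⟩
      rw [hqe ⟨0, hn⟩] at this
      by_contra hS0
      push_neg at hS0
      have : (p ⟨0, hn⟩) ^ ((2:ℝ)/3) / S ≤ 0 :=
        div_nonpos_of_nonneg_of_nonpos (Real.rpow_nonneg (hp _) _) hS0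
      linarith
    have hterm : ∀ i, p i / Real.sqrt (q i) = (p i) ^ ((2:ℝ)/3) * S ^ ((1:ℝ)/2) := by
      intro i
      rw [hqe i, Real.sqrt_eq_rpow,
        Real.div_rpow (Real.rpow_nonneg (hp i) _) hSpos.le,
        ← Real.rpow_mul (hp i)]
      norm_num
      rw [div_div_eq_mul_div, mul_comm, mul_div_assoc, mul_comm]
      congr 1
      nth_rewrite 1 [← Real.rpow_one (p i)]
      rw [← Real.rpow_sub (hppos i)]
      norm_num
    rw [Finset.sum_congr rfl (fun i _ => hterm i), ← Finset.sum_mul, ← hS]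
    nth_rewrite 1 [← Real.rpow_one S]
    rw [← Real.rpow_add hSpos]
    norm_num
end

section
/- Let S and A be finite nonempty types, γ ∈ [0,1), R_max ≥ 0, and suppose Q₁, Q₂ : S × A → ℝ satisfy the Bellman equations as above with |r(s,a,s')| ≤ R_max and |Q₂(s',a')| ≤ R_max/(1-γ). Suppose moreover that for every (s,a), ∑_{s'} |p₁(s'|s,a) − p₂(s'|s,a)| ≤ e for a fixed e ≥ 0. Then sup_{(s,a)} |Q₁(s,a) − Q₂(s,a)| ≤ (e·R_max·(1 + γ/(1-γ)))/(1-γ) ≤ 2·e·R_max/(1-γ)². -/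
theorem stmt_16 {S A : Type*} [Fintype S] [Fintype A] [Nonempty S] [Nonempty A]
    (γ R_max e : ℝ) (hγ0 : 0 ≤ γ) (hγ1 : γ < 1) (hR : 0 ≤ R_max) (he : 0 ≤ e)
    (r : S × A × S → ℝ) (p₁ p₂ : S → A → S → ℝ) (π : S → A → ℝ)
    (hp₁0 : ∀ s a s', 0 ≤ p₁ s a s') (hp₁1 : ∀ s a, ∑ s', p₁ s a s' = 1)
    (hp₂0 : ∀ s a s', 0 ≤ p₂ s a s') (hp₂1 : ∀ s a, ∑ s', p₂ s a s' = 1)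
    (hπ0 : ∀ s a, 0 ≤ π s a) (hπ1 : ∀ s, ∑ a, π s a = 1)
    (Q₁ Q₂ : S × A → ℝ)
    (hQ₁ : ∀ s a, Q₁ (s, a) =
      ∑ s', p₁ s a s' * (r (s, a, s') + γ * ∑ a', π s' a' * Q₁ (s', a')))
    (hQ₂ : ∀ s a, Q₂ (s, a) =
      ∑ s', p₂ s a s' * (r (s, a, s') + γ * ∑ a', π s' a' * Q₂ (s', a')))
    (hr : ∀ s a s', |r (s, a, s')| ≤ R_max)
    (hQ₂bd : ∀ s' a', |Q₂ (s', a')| ≤ R_max / (1 - γ))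
    (hL1 : ∀ s a, ∑ s', |p₁ s a s' - p₂ s a s'| ≤ e) :
    (⨆ sa : S × A, |Q₁ sa - Q₂ sa|) ≤ e * R_max * (1 + γ / (1 - γ)) / (1 - γ) ∧
      e * R_max * (1 + γ / (1 - γ)) / (1 - γ) ≤ 2 * e * R_max / (1 - γ) ^ 2 := by
  have h1γ : 0 < 1 - γ := by linarith
  set M : ℝ := ⨆ sa : S × A, |Q₁ sa - Q₂ sa| with hMdef
  have hbdd : BddAbove (Set.range fun sa : S × A => |Q₁ sa - Q₂ sa|) :=
    Set.Finite.bddAbove (Set.finite_range _)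
  have hM_bd : ∀ sa : S × A, |Q₁ sa - Q₂ sa| ≤ M := fun sa => le_ciSup hbdd sa
  have hM0 : 0 ≤ M := le_trans (abs_nonneg _) (hM_bd (Classical.arbitrary (S × A)))
  set B : ℝ := R_max + γ * (R_max / (1 - γ)) with hBdef
  have hB0 : 0 ≤ B := by positivity
  -- value function difference bound
  have hV : ∀ s' : S, |(∑ a', π s' a' * Q₁ (s', a')) - ∑ a', π s' a' * Q₂ (s', a')| ≤ M := by
    intro s'
    rw [← Finset.sum_sub_distrib]
    calc |∑ a', (π s' a' * Q₁ (s', a') - π s' a' * Q₂ (s', a'))|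
        ≤ ∑ a', |π s' a' * Q₁ (s', a') - π s' a' * Q₂ (s', a')| :=
          Finset.abs_sum_le_sum_abs _ _
      _ ≤ ∑ a', π s' a' * M := by
          apply Finset.sum_le_sum
          intro a' _
          rw [← mul_sub, abs_mul, abs_of_nonneg (hπ0 s' a')]
          exact mul_le_mul_of_nonneg_left (hM_bd (s', a')) (hπ0 s' a')
      _ = M := by rw [← Finset.sum_mul, hπ1 s', one_mul]
  -- key per-pair bound
  have hkey : ∀ sa : S × A, |Q₁ sa - Q₂ sa| ≤ e * B + γ * M := by
    rintro ⟨s, a⟩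
    have hdecomp : Q₁ (s, a) - Q₂ (s, a) =
        (∑ s', (p₁ s a s' - p₂ s a s') * (r (s, a, s') + γ * ∑ a', π s' a' * Q₂ (s', a')))
        + ∑ s', p₁ s a s' * (γ * ((∑ a', π s' a' * Q₁ (s', a')) - ∑ a', π s' a' * Q₂ (s', a'))) := by
      rw [hQ₁ s a, hQ₂ s a, ← Finset.sum_add_distrib, ← Finset.sum_sub_distrib]
      apply Finset.sum_congr rfl
      intro s' _
      ring
    rw [hdecomp]
    calc |(∑ s', (p₁ s a s' - p₂ s a s') * (r (s, a, s') + γ * ∑ a', π s' a' * Q₂ (s', a')))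
        + ∑ s', p₁ s a s' * (γ * ((∑ a', π s' a' * Q₁ (s', a')) - ∑ a', π s' a' * Q₂ (s', a')))|
        ≤ (∑ s', |p₁ s a s' - p₂ s a s'| * B) + ∑ s', p₁ s a s' * (γ * M) := by
          refine le_trans (abs_add_le _ _) (add_le_add ?_ ?_)
          · refine le_trans (Finset.abs_sum_le_sum_abs _ _) (Finset.sum_le_sum ?_)
            intro s' _
            rw [abs_mul]
            apply mul_le_mul_of_nonneg_left _ (abs_nonneg _)
            refine le_trans (abs_add_le _ _) (add_le_add (hr s a s') ?_)
            rw [abs_mul, abs_of_nonneg hγ0]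
            apply mul_le_mul_of_nonneg_left _ hγ0
            calc |∑ a', π s' a' * Q₂ (s', a')| ≤ ∑ a', |π s' a' * Q₂ (s', a')| :=
                  Finset.abs_sum_le_sum_abs _ _
              _ ≤ ∑ a', π s' a' * (R_max / (1 - γ)) := by
                  apply Finset.sum_le_sum
                  intro a' _
                  rw [abs_mul, abs_of_nonneg (hπ0 s' a')]
                  exact mul_le_mul_of_nonneg_left (hQ₂bd s' a') (hπ0 s' a')
              _ = R_max / (1 - γ) := by rw [← Finset.sum_mul, hπ1 s', one_mul]
          · refine le_trans (Finset.abs_sum_le_sum_abs _ _) (Finset.sum_le_sum ?_)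
            intro s' _
            rw [abs_mul, abs_of_nonneg (hp₁0 s a s'), abs_mul, abs_of_nonneg hγ0]
            exact mul_le_mul_of_nonneg_left
              (mul_le_mul_of_nonneg_left (hV s') hγ0) (hp₁0 s a s')
      _ ≤ e * B + γ * M := by
          rw [← Finset.sum_mul, ← Finset.sum_mul, hp₁1 s a, one_mul]
          exact add_le_add (mul_le_mul_of_nonneg_right (hL1 s a) hB0) le_rfl
  have hMle : M ≤ e * B + γ * M := ciSup_le hkey
  have hM : M ≤ e * B / (1 - γ) := by
    rw [le_div_iff₀ h1γ]
    nlinarith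
  constructor
  · have hBeq : e * B = e * R_max * (1 + γ / (1 - γ)) := by rw [hBdef]; ring
    calc M ≤ e * B / (1 - γ) := hM
      _ = e * R_max * (1 + γ / (1 - γ)) / (1 - γ) := by rw [hBeq]
  · have h1 : 1 + γ / (1 - γ) = 1 / (1 - γ) := by field_simp; ring
    rw [h1, mul_one_div, div_div, ← sq]
    gcongr ?_ / _
    nlinarith [mul_nonneg he hR]
end
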